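/- arXiv:1209.3578 — 2 statements merged into one kernel-verified Lean document; each statement's English description precedes it below -/
import Mathlib

section
/- Let f̃(r) = -C r^σ with C > 0 and σ ∈ [1/2, 1), and let F̃(r) = -(C/(σ+1)) r^{σ+1}. Then on a compact 2-dimensional Riemannian manifold M there exists C̃ > 0 such that for every u ∈ H^{1,2}(M;ℂ): ∫_M |f̃(|u(x)|²)| |u(x)|² dx ≤ (1/2)|∇u|_{L²}² + (1/2)∫_M F̃(|u(x)|²) dx + C̃ |u|_{L²}^{2/(1-σ)}. -/
open MeasureTheory

lemma young_aux (σ : ℝ) (hσ1 : 1 / 2 ≤ σ) (hσ2 : σ < 1) (K : ℝ) (hK : 0 < K)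
    (g X : ℝ) (hg : 0 ≤ g) (hX : 0 ≤ X) :
    K * g ^ (2 * σ) * X ≤ (1 / 2) * g ^ 2
      + ((1 - σ) * ((2:ℝ) ^ σ * K) ^ (1 / (1 - σ))) * X ^ (1 / (1 - σ)) := by
  have hσ0 : 0 < σ := lt_of_lt_of_le (by norm_num) hσ1
  have h1σ : 0 < 1 - σ := by linarith
  have hpq : (1/σ).HolderConjugate (1/(1-σ)) := by
    constructor
    · rw [one_div, one_div, inv_inv, inv_inv, inv_one]; ring
    · exact div_pos one_pos hσ0
    · exact div_pos one_pos h1σ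
  have ha : (0:ℝ) ≤ (2:ℝ) ^ (-σ) * g ^ (2 * σ) :=
    mul_nonneg (Real.rpow_nonneg (by norm_num) _) (Real.rpow_nonneg hg _)
  have hb : (0:ℝ) ≤ (2:ℝ) ^ σ * K * X :=
    mul_nonneg (mul_nonneg (Real.rpow_nonneg (by norm_num) _) hK.le) hX
  have hy := Real.young_inequality_of_nonneg ha hb hpq
  have h2pow : (2:ℝ) ^ (-σ) * (2:ℝ) ^ σ = 1 := by
    rw [← Real.rpow_add (by norm_num : (0:ℝ) < 2)]; simp
  have hmul : ((2:ℝ) ^ (-σ) * g ^ (2 * σ)) * ((2:ℝ) ^ σ * K * X) = K * g ^ (2*σ) * X := by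
    rw [show ((2:ℝ) ^ (-σ) * g ^ (2 * σ)) * ((2:ℝ) ^ σ * K * X)
        = ((2:ℝ) ^ (-σ) * (2:ℝ) ^ σ) * (K * g ^ (2*σ) * X) by ring, h2pow, one_mul]
  have hap : ((2:ℝ) ^ (-σ) * g ^ (2 * σ)) ^ (1/σ) = (1/2) * g ^ 2 := by
    rw [Real.mul_rpow (Real.rpow_nonneg (by norm_num) _) (Real.rpow_nonneg hg _),
      ← Real.rpow_mul (by norm_num : (0:ℝ) ≤ 2), ← Real.rpow_mul hg,
      show -σ * (1/σ) = -1 by field_simp,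
      show 2 * σ * (1/σ) = 2 by field_simp,
      Real.rpow_neg_one, Real.rpow_two]
    norm_num
  have hbp : ((2:ℝ) ^ σ * K * X) ^ (1/(1-σ)) = ((2:ℝ) ^ σ * K) ^ (1/(1-σ)) * X ^ (1/(1-σ)) :=
    Real.mul_rpow (mul_nonneg (Real.rpow_nonneg (by norm_num) _) hK.le) hX
  rw [hmul, hap, hbp] at hy
  have hdiv1 : (1/2 * g ^ 2) / (1/σ) = σ * (1/2 * g ^ 2) := by
    field_simp
  have hdiv2 : (((2:ℝ) ^ σ * K) ^ (1/(1-σ)) * X ^ (1/(1-σ))) / (1/(1-σ))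
      = (1-σ) * ((2:ℝ) ^ σ * K) ^ (1/(1-σ)) * X ^ (1/(1-σ)) := by
    field_simp
  rw [hdiv1, hdiv2] at hy
  have hle : σ * (1/2 * g ^ 2) ≤ 1/2 * g ^ 2 := by nlinarith [sq_nonneg g]
  calc K * g ^ (2*σ) * X
      ≤ σ * (1/2 * g^2) + (1-σ) * ((2:ℝ)^σ * K) ^ (1/(1-σ)) * X ^ (1/(1-σ)) := hy
    _ ≤ _ := by linarith

/-- Focusing estimate on a compact 2-dimensional Riemannian manifold.  With
`f̃(r) = -C r^σ`, `F̃(r) = -(C/(σ+1)) r^{σ+1}`, `σ ∈ [1/2,1)`, the manifold encoded as a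
finite measure space with Sobolev predicate `H12` and gradient `L²`-norm `gradL2`, and the
Gagliardo–Nirenberg inequality `∫ |u|^{2σ+2} ≤ C_GN |∇u|_{L²}^{2σ} |u|_{L²}²` assumed,
there exists `C̃ > 0` such that for every `u ∈ H^{1,2}`:
`∫ |f̃(|u|²)| |u|² ≤ (1/2)|∇u|_{L²}² + (1/2)∫ F̃(|u|²) + C̃ |u|_{L²}^{2/(1-σ)}`. -/
theorem focusing_energy_estimate
    {M : Type*} [MeasurableSpace M] (μ : Measure M) [IsFiniteMeasure μ]
    (C σ : ℝ) (hC : 0 < C) (hσ1 : 1 / 2 ≤ σ) (hσ2 : σ < 1)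
    (H12 : (M → ℂ) → Prop) (gradL2 : (M → ℂ) → ℝ)
    (hgrad_nonneg : ∀ u, 0 ≤ gradL2 u)
    (CGN : ℝ) (hCGN : 0 < CGN)
    (hGN : ∀ u : M → ℂ, H12 u →
      ∫ x, ‖u x‖ ^ (2 * σ + 2) ∂μ ≤ CGN * gradL2 u ^ (2 * σ) * ∫ x, ‖u x‖ ^ 2 ∂μ)
    (hint : ∀ u : M → ℂ, H12 u → Integrable (fun x => ‖u x‖ ^ (2 * σ + 2)) μ) :
    ∃ Ct : ℝ, 0 < Ct ∧ ∀ u : M → ℂ, H12 u →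
      ∫ x, |(-C * (‖u x‖ ^ 2) ^ σ)| * ‖u x‖ ^ 2 ∂μ
        ≤ (1 / 2) * gradL2 u ^ 2
          + (1 / 2) * ∫ x, (-(C / (σ + 1)) * (‖u x‖ ^ 2) ^ (σ + 1)) ∂μ
          + Ct * Real.sqrt (∫ x, ‖u x‖ ^ 2 ∂μ) ^ (2 / (1 - σ)) := by
  have hσ0 : 0 < σ := lt_of_lt_of_le (by norm_num) hσ1
  have h1σ : 0 < 1 - σ := by linarith
  have hσ1' : (0:ℝ) < σ + 1 := by linarith
  set A : ℝ := C + C / (2 * (σ + 1)) with hA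
  have hApos : 0 < A := by
    have h1 : 0 < C / (2 * (σ + 1)) := div_pos hC (by linarith)
    rw [hA]; linarith
  set K : ℝ := A * CGN with hKdef
  have hK : 0 < K := mul_pos hApos hCGN
  refine ⟨(1 - σ) * ((2:ℝ) ^ σ * K) ^ (1 / (1 - σ)), ?_, ?_⟩
  · exact mul_pos h1σ (Real.rpow_pos_of_pos (mul_pos (Real.rpow_pos_of_pos (by norm_num) _) hK) _)
  intro u hu
  set I : ℝ := ∫ x, ‖u x‖ ^ (2 * σ + 2) ∂μ with hI
  set X : ℝ := ∫ x, ‖u x‖ ^ 2 ∂μ with hX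
  have hXnn : 0 ≤ X := integral_nonneg fun x => by positivity
  have hpt : ∀ x : M, |(-C * (‖u x‖ ^ 2) ^ σ)| * ‖u x‖ ^ 2
      = C * ‖u x‖ ^ (2 * σ + 2) := by
    intro x
    have hn : (0:ℝ) ≤ ‖u x‖ := norm_nonneg _
    have h1 : ((‖u x‖ ^ 2 : ℝ)) ^ σ = ‖u x‖ ^ (2 * σ) := by
      rw [← Real.rpow_natCast (‖u x‖) 2, ← Real.rpow_mul hn]
      norm_num [mul_comm]
    have h2 : ‖u x‖ ^ (2*σ) * ‖u x‖ ^ (2:ℕ) = ‖u x‖ ^ (2 * σ + 2) := by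
      rw [← Real.rpow_natCast (‖u x‖) 2, ← Real.rpow_add' hn (by positivity)]
      norm_num
    rw [abs_mul, abs_of_nonpos (by simp [hC.le] : (-C:ℝ) ≤ 0), h1,
      abs_of_nonneg (Real.rpow_nonneg hn _), mul_assoc, h2]
    ring
  have hpt2 : ∀ x : M, (-(C / (σ + 1)) * (‖u x‖ ^ 2) ^ (σ + 1))
      = -(C / (σ + 1)) * ‖u x‖ ^ (2 * σ + 2) := by
    intro x
    have hn : (0:ℝ) ≤ ‖u x‖ := norm_nonneg _
    congr 1
    rw [← Real.rpow_natCast (‖u x‖) 2, ← Real.rpow_mul hn]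
    ring_nf
  have hL : ∫ x, |(-C * (‖u x‖ ^ 2) ^ σ)| * ‖u x‖ ^ 2 ∂μ = C * I := by
    simp_rw [hpt]; exact integral_const_mul C _
  have hR : ∫ x, (-(C / (σ + 1)) * (‖u x‖ ^ 2) ^ (σ + 1)) ∂μ = -(C / (σ + 1)) * I := by
    simp_rw [hpt2]; exact integral_const_mul _ _
  rw [hL, hR]
  have hne : (1 - σ) ≠ 0 := h1σ.ne'
  have hsq : Real.sqrt X ^ (2 / (1 - σ)) = X ^ (1 / (1 - σ)) := by
    rw [Real.sqrt_eq_rpow, ← Real.rpow_mul hXnn,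
      show (1/2) * (2/(1-σ)) = 1/(1-σ) by field_simp]
  rw [hsq]
  have hGNu := hGN u hu
  have hya := young_aux σ hσ1 hσ2 K hK (gradL2 u) X (hgrad_nonneg u) hXnn
  have hAI : A * I ≤ K * gradL2 u ^ (2 * σ) * X := by
    calc A * I ≤ A * (CGN * gradL2 u ^ (2 * σ) * X) :=
          mul_le_mul_of_nonneg_left hGNu hApos.le
      _ = K * gradL2 u ^ (2 * σ) * X := by rw [hKdef]; ring
  have hAeq : A * I = C * I + (1/2) * ((C / (σ + 1)) * I) := by
    rw [hA]; field_simp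
  clear_value A K I X
  linarith [hya, hAI]
end

section
/- Let D be a compact d-dimensional Riemannian manifold, θ ∈ (0,1), q ∈ [1,∞), Y, Y₁ real separable Banach spaces, and f : Y → Y₁ of class C¹ with f' Lipschitz on balls. Set K₁(f,R) = sup_{|x|,|y|≤R, x≠y} |f(y)-f(x)|/|y-x| and K₂(f,R) = sup_{|x|,|y|≤R, x≠y} ‖f'(y)-f'(x)‖/|y-x|. Then for all γ, σ ∈ W^{θ,q}(D;Y) ∩ L^∞(D;Y), with R = max(|γ|_∞, |σ|_∞): [f∘γ - f∘σ]_{θ,q} ≤ K₂(f,R)·|γ-σ|_∞·([σ]_{θ,q} + (1/2)[γ-σ]_{θ,q}) + K₁(f,R)·[γ-σ]_{θ,q}. -/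
open MeasureTheory

/-- Gagliardo seminorm `[φ]_{θ,q}` for `Y`-valued maps on a metric measure space `D`
(`d` plays the role of the dimension of the compact manifold). -/
noncomputable def gagliardoSeminormV {D : Type*} [MetricSpace D] [MeasurableSpace D]
    {Y : Type*} [NormedAddCommGroup Y]
    (μ : Measure D) (d : ℕ) (θ q : ℝ) (φ : D → Y) : ℝ :=
  (∫ p : D × D, ‖φ p.1 - φ p.2‖ ^ q / dist p.1 p.2 ^ ((d : ℝ) + θ * q) ∂(μ.prod μ)) ^ (1 / q)

/-- The `L^∞` norm of a `Y`-valued map. -/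
noncomputable def linftyNormV {D : Type*} [MeasurableSpace D] {Y : Type*}
    [NormedAddCommGroup Y] (μ : Measure D) (φ : D → Y) : ℝ :=
  (eLpNorm φ ⊤ μ).toReal

open Set Filter in
lemma nemytski_fderiv_bound {Y Y₁ : Type*} [NormedAddCommGroup Y] [NormedSpace ℝ Y]
    [NormedAddCommGroup Y₁] [NormedSpace ℝ Y₁]
    {f : Y → Y₁} {K₁ K₂ R : ℝ} (hR : 0 < R) (hK₁0 : 0 ≤ K₁)
    (hK₁ : ∀ x y : Y, ‖x‖ ≤ R → ‖y‖ ≤ R → ‖f y - f x‖ ≤ K₁ * ‖y - x‖)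
    (hK₂ : ∀ x y : Y, ‖x‖ ≤ R → ‖y‖ ≤ R →
      ‖fderiv ℝ f y - fderiv ℝ f x‖ ≤ K₂ * ‖y - x‖)
    {z : Y} (hz : ‖z‖ ≤ R) : ‖fderiv ℝ f z‖ ≤ K₁ := by
  have hIB : ∀ w : Y, ‖w‖ < R → ‖fderiv ℝ f w‖ ≤ K₁ := by
    intro w hw
    apply norm_fderiv_le_of_lip' ℝ hK₁0
    have hball : Metric.closedBall w (R - ‖w‖) ∈ nhds w :=
      Metric.closedBall_mem_nhds _ (by linarith)
    filter_upwards [hball] with p hp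
    apply hK₁ w p (le_of_lt hw)
    have h1 : ‖p - w‖ ≤ R - ‖w‖ := by rwa [Metric.mem_closedBall, dist_eq_norm] at hp
    have h2 := norm_add_le (p - w) w
    rw [sub_add_cancel] at h2
    linarith
  have hev : ∀ᶠ t in nhdsWithin (1:ℝ) (Set.Iio 1),
      ‖fderiv ℝ f z‖ ≤ K₁ + K₂ * ((1 - t) * ‖z‖) := by
    filter_upwards [Ico_mem_nhdsLT_of_mem (Set.right_mem_Ioc.mpr one_pos)] with t ht
    have ht0 : (0:ℝ) ≤ t := ht.1
    have ht1 : t < 1 := ht.2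
    have htz : ‖t • z‖ < R := by
      rw [norm_smul, Real.norm_of_nonneg ht0]
      calc t * ‖z‖ ≤ t * R := mul_le_mul_of_nonneg_left hz ht0
        _ < R := by nlinarith
    have h1 := hIB _ htz
    have h2 := hK₂ (t • z) z (le_of_lt htz) hz
    have h3 : ‖z - t • z‖ = (1 - t) * ‖z‖ := by
      have e : z - t • z = (1 - t) • z := by module
      rw [e, norm_smul, Real.norm_of_nonneg (by linarith)]
    have h4 := norm_add_le (fderiv ℝ f z - fderiv ℝ f (t • z)) (fderiv ℝ f (t • z))
    rw [sub_add_cancel] at h4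
    rw [h3] at h2
    linarith
  have hlim : Tendsto (fun t : ℝ => K₁ + K₂ * ((1 - t) * ‖z‖))
      (nhdsWithin (1:ℝ) (Set.Iio 1)) (nhds K₁) := by
    have hc : Tendsto (fun t : ℝ => K₁ + K₂ * ((1 - t) * ‖z‖)) (nhds (1:ℝ))
        (nhds (K₁ + K₂ * ((1 - 1) * ‖z‖))) := by
      apply Continuous.tendsto; continuity
    simpa using hc.mono_left nhdsWithin_le_nhds
  exact ge_of_tendsto hlim hev

open Set Filter in
lemma nemytski_pointwise {Y Y₁ : Type*} [NormedAddCommGroup Y] [NormedSpace ℝ Y]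
    [NormedAddCommGroup Y₁] [NormedSpace ℝ Y₁]
    {f : Y → Y₁} (hf : ContDiff ℝ 1 f) {K₁ K₂ R M : ℝ}
    (hfd : ∀ z : Y, ‖z‖ ≤ R → ‖fderiv ℝ f z‖ ≤ K₁)
    (hK₂ : ∀ x y : Y, ‖x‖ ≤ R → ‖y‖ ≤ R →
      ‖fderiv ℝ f y - fderiv ℝ f x‖ ≤ K₂ * ‖y - x‖)
    (hK₂0 : 0 ≤ K₂) (hM0 : 0 ≤ M)
    {x y u v : Y} (hx : ‖x‖ ≤ R) (hy : ‖y‖ ≤ R) (hu : ‖u‖ ≤ R) (hv : ‖v‖ ≤ R)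
    (hux : ‖u - x‖ ≤ M) (hvy : ‖v - y‖ ≤ M) :
    ‖(f u - f x) - (f v - f y)‖
      ≤ K₂ * M * (‖x - y‖ + 1/2 * ‖(u - x) - (v - y)‖) + K₁ * ‖(u - x) - (v - y)‖ := by
  have hdiff := hf.differentiable one_ne_zero
  set δ₁ := u - x with hδ₁
  set δ₂ := v - y with hδ₂
  set c₁ : ℝ := K₂ * M * ‖x - y‖ + K₁ * ‖δ₁ - δ₂‖ with hc₁
  set c₂ : ℝ := K₂ * M * ‖δ₁ - δ₂‖ with hc₂
  have hline : ∀ (z δ : Y) (t : ℝ), HasDerivAt (fun t : ℝ => z + t • δ) δ t := by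
    intro z δ t
    simpa using ((hasDerivAt_id t).smul_const δ).const_add z
  have hφ' : ∀ t : ℝ, HasDerivAt
      (fun t : ℝ => (f (x + t • δ₁) - f x) - (f (y + t • δ₂) - f y))
      ((fderiv ℝ f (x + t • δ₁)) δ₁ - (fderiv ℝ f (y + t • δ₂)) δ₂) t := by
    intro t
    exact (((hdiff _).hasFDerivAt.comp_hasDerivAt t (hline x δ₁ t)).sub_const (f x)).sub
      (((hdiff _).hasFDerivAt.comp_hasDerivAt t (hline y δ₂ t)).sub_const (f y))
  have hB : ∀ t : ℝ, HasDerivAt (fun t : ℝ => c₁ * t + c₂ / 2 * t ^ 2) (c₁ + c₂ * t) t := by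
    intro t
    have h1 : HasDerivAt (fun t : ℝ => c₁ * t) (c₁ * 1) t := (hasDerivAt_id t).const_mul c₁
    have h2 : HasDerivAt (fun t : ℝ => c₂ / 2 * t ^ 2) (c₂ / 2 * (↑2 * t ^ 1)) t :=
      (hasDerivAt_pow 2 t).const_mul (c₂ / 2)
    exact (h1.add h2).congr_deriv (by ring)
  have hmem : ∀ t : ℝ, t ∈ Set.Icc (0:ℝ) 1 → ∀ z w : Y, ‖z‖ ≤ R → ‖w‖ ≤ R →
      ‖z + t • (w - z)‖ ≤ R := by
    intro t ht z w hz hw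
    have e : z + t • (w - z) = (1 - t) • z + t • w := by module
    rw [e]
    have h1 : ‖(1 - t) • z + t • w‖ ≤ ‖(1-t) • z‖ + ‖t • w‖ := norm_add_le _ _
    rw [norm_smul, norm_smul, Real.norm_of_nonneg (by linarith [ht.2]),
      Real.norm_of_nonneg ht.1] at h1
    have h2 : (1 - t) * ‖z‖ ≤ (1 - t) * R := mul_le_mul_of_nonneg_left hz (by linarith [ht.2])
    have h3 : t * ‖w‖ ≤ t * R := mul_le_mul_of_nonneg_left hw ht.1
    linarith
  have bound : ∀ t ∈ Set.Ico (0:ℝ) 1,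
      ‖(fderiv ℝ f (x + t • δ₁)) δ₁ - (fderiv ℝ f (y + t • δ₂)) δ₂‖ ≤ c₁ + c₂ * t := by
    intro t ht
    have htI : t ∈ Set.Icc (0:ℝ) 1 := ⟨ht.1, le_of_lt ht.2⟩
    have ha : ‖x + t • δ₁‖ ≤ R := hmem t htI x u hx hu
    have hb : ‖y + t • δ₂‖ ≤ R := hmem t htI y v hy hv
    have hsplit : (fderiv ℝ f (x + t • δ₁)) δ₁ - (fderiv ℝ f (y + t • δ₂)) δ₂
        = (fderiv ℝ f (x + t • δ₁) - fderiv ℝ f (y + t • δ₂)) δ₁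
          + (fderiv ℝ f (y + t • δ₂)) (δ₁ - δ₂) := by
      simp only [ContinuousLinearMap.sub_apply, map_sub]
      abel
    rw [hsplit]
    have hab : ‖(x + t • δ₁) - (y + t • δ₂)‖ ≤ ‖x - y‖ + t * ‖δ₁ - δ₂‖ := by
      have e : (x + t • δ₁) - (y + t • δ₂) = (x - y) + t • (δ₁ - δ₂) := by module
      rw [e]
      have := norm_add_le (x - y) (t • (δ₁ - δ₂))
      rwa [norm_smul, Real.norm_of_nonneg ht.1] at this
    have h1 : ‖(fderiv ℝ f (x + t • δ₁) - fderiv ℝ f (y + t • δ₂)) δ₁‖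
        ≤ (K₂ * (‖x - y‖ + t * ‖δ₁ - δ₂‖)) * M := by
      calc ‖(fderiv ℝ f (x + t • δ₁) - fderiv ℝ f (y + t • δ₂)) δ₁‖
          ≤ ‖fderiv ℝ f (x + t • δ₁) - fderiv ℝ f (y + t • δ₂)‖ * ‖δ₁‖ :=
            ContinuousLinearMap.le_opNorm _ _
        _ ≤ (K₂ * (‖x - y‖ + t * ‖δ₁ - δ₂‖)) * M := by
            apply mul_le_mul _ hux (norm_nonneg _)
              (mul_nonneg hK₂0 (add_nonneg (norm_nonneg _) (mul_nonneg ht.1 (norm_nonneg _))))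
            exact le_trans (hK₂ _ _ hb ha) (mul_le_mul_of_nonneg_left hab hK₂0)
    have h2 : ‖(fderiv ℝ f (y + t • δ₂)) (δ₁ - δ₂)‖ ≤ K₁ * ‖δ₁ - δ₂‖ :=
      le_trans (ContinuousLinearMap.le_opNorm _ _)
        (mul_le_mul_of_nonneg_right (hfd _ hb) (norm_nonneg _))
    calc ‖(fderiv ℝ f (x + t • δ₁) - fderiv ℝ f (y + t • δ₂)) δ₁
          + (fderiv ℝ f (y + t • δ₂)) (δ₁ - δ₂)‖
        ≤ ‖(fderiv ℝ f (x + t • δ₁) - fderiv ℝ f (y + t • δ₂)) δ₁‖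
          + ‖(fderiv ℝ f (y + t • δ₂)) (δ₁ - δ₂)‖ := norm_add_le _ _
      _ ≤ (K₂ * (‖x - y‖ + t * ‖δ₁ - δ₂‖)) * M + K₁ * ‖δ₁ - δ₂‖ := add_le_add h1 h2
      _ = c₁ + c₂ * t := by rw [hc₁, hc₂]; ring
  have hfc := hf.continuous
  have hcont : ContinuousOn
      (fun t : ℝ => (f (x + t • δ₁) - f x) - (f (y + t • δ₂) - f y)) (Set.Icc 0 1) := by
    apply Continuous.continuousOn
    apply Continuous.sub <;> apply Continuous.sub
    · exact hfc.comp (continuous_const.add (continuous_id.smul continuous_const))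
    · exact continuous_const
    · exact hfc.comp (continuous_const.add (continuous_id.smul continuous_const))
    · exact continuous_const
  have key := image_norm_le_of_norm_deriv_right_le_deriv_boundary hcont
    (fun t _ => (hφ' t).hasDerivWithinAt) (by norm_num) hB bound
    (Set.right_mem_Icc.mpr zero_le_one)
  have e1 : x + (1:ℝ) • δ₁ = u := by rw [one_smul, hδ₁]; abel
  have e2 : y + (1:ℝ) • δ₂ = v := by rw [one_smul, hδ₂]; abel
  rw [e1, e2] at key
  calc ‖(f u - f x) - (f v - f y)‖ ≤ c₁ * 1 + c₂ / 2 * 1 ^ 2 := key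
    _ = K₂ * M * (‖x - y‖ + 1/2 * ‖δ₁ - δ₂‖) + K₁ * ‖δ₁ - δ₂‖ := by rw [hc₁, hc₂]; ring

open scoped ENNReal NNReal in
lemma nemytski_aux_mem {Ω : Type*} [MeasurableSpace Ω] {ν : Measure Ω} (F : Ω → ℝ)
    (hF : ∀ ω, 0 ≤ F ω) {q : ℝ} (hq0 : 0 < q)
    (hint : Integrable (fun ω => F ω ^ q) ν) :
    MemLp F (ENNReal.ofReal q) ν ∧
    (∫ ω, F ω ^ q ∂ν) ^ (1/q) = (eLpNorm F (ENNReal.ofReal q) ν).toReal := by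
  have hp0 : ENNReal.ofReal q ≠ 0 := by
    simp [ENNReal.ofReal_eq_zero, not_le, hq0]
  have hpt : ENNReal.ofReal q ≠ ⊤ := ENNReal.ofReal_ne_top
  have hptr : (ENNReal.ofReal q).toReal = q := ENNReal.toReal_ofReal hq0.le
  have hid : ∀ ω, (F ω ^ q) ^ (1/q) = F ω := by
    intro ω
    rw [← Real.rpow_mul (hF ω), mul_one_div, div_self hq0.ne', Real.rpow_one]
  have hFm : AEStronglyMeasurable F ν := by
    have e : F = fun ω => (F ω ^ q) ^ (1/q) := funext fun ω => (hid ω).symm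
    rw [e]
    exact (Real.continuous_rpow_const (by positivity)).comp_aestronglyMeasurable hint.1
  have hmem : MemLp F (ENNReal.ofReal q) ν := by
    refine ⟨hFm, ?_⟩
    rw [eLpNorm_eq_lintegral_rpow_enorm_toReal hp0 hpt, hptr]
    refine ENNReal.rpow_lt_top_of_nonneg (by positivity) ?_
    have hnn : ∀ ω, ‖F ω‖ₑ ^ q = ‖F ω ^ q‖ₑ := by
      intro ω
      rw [← ofReal_norm_eq_enorm, ← ofReal_norm_eq_enorm,
        Real.norm_of_nonneg (hF ω), Real.norm_of_nonneg (Real.rpow_nonneg (hF ω) q),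
        ← ENNReal.ofReal_rpow_of_nonneg (hF ω) hq0.le]
    rw [lintegral_congr hnn]
    exact hint.2.ne
  refine ⟨hmem, ?_⟩
  rw [hmem.eLpNorm_eq_integral_rpow_norm hp0 hpt, hptr,
    ENNReal.toReal_ofReal (by positivity), one_div]
  congr 1
  apply integral_congr_ae
  filter_upwards with ω
  rw [Real.norm_of_nonneg (hF ω)]

open scoped ENNReal NNReal in
lemma nemytski_combine {Ω : Type*} [MeasurableSpace Ω] {ν : Measure Ω}
    {G U V : Ω → ℝ} {q a c : ℝ} (hq : 1 ≤ q)
    (hG : ∀ ω, 0 ≤ G ω) (hU : ∀ ω, 0 ≤ U ω) (hV : ∀ ω, 0 ≤ V ω)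
    (ha : 0 ≤ a) (hc : 0 ≤ c)
    (hGi : Integrable (fun ω => G ω ^ q) ν)
    (hUi : Integrable (fun ω => U ω ^ q) ν)
    (hVi : Integrable (fun ω => V ω ^ q) ν)
    (hptw : ∀ᵐ ω ∂ν, G ω ≤ a * U ω + c * V ω) :
    (∫ ω, G ω ^ q ∂ν) ^ (1/q)
      ≤ a * (∫ ω, U ω ^ q ∂ν) ^ (1/q) + c * (∫ ω, V ω ^ q ∂ν) ^ (1/q) := by
  have hq0 : (0:ℝ) < q := lt_of_lt_of_le one_pos hq
  obtain ⟨hGm, hGe⟩ := nemytski_aux_mem G hG hq0 hGi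
  obtain ⟨hUm, hUe⟩ := nemytski_aux_mem U hU hq0 hUi
  obtain ⟨hVm, hVe⟩ := nemytski_aux_mem V hV hq0 hVi
  rw [hGe, hUe, hVe]
  have hp1 : 1 ≤ ENNReal.ofReal q := ENNReal.one_le_ofReal.mpr hq
  have hchain : eLpNorm G (ENNReal.ofReal q) ν
      ≤ ‖a‖₊ • eLpNorm U (ENNReal.ofReal q) ν + ‖c‖₊ • eLpNorm V (ENNReal.ofReal q) ν := by
    calc eLpNorm G (ENNReal.ofReal q) ν ≤ eLpNorm (a • U + c • V) (ENNReal.ofReal q) ν := by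
          apply eLpNorm_mono_ae
          filter_upwards [hptw] with ω hω
          have h1 : (a • U + c • V) ω = a * U ω + c * V ω := by
            simp [smul_eq_mul]
          rw [Real.norm_of_nonneg (hG ω), h1, Real.norm_of_nonneg
            (add_nonneg (mul_nonneg ha (hU ω)) (mul_nonneg hc (hV ω)))]
          simpa [h1] using hω
      _ ≤ eLpNorm (a • U) (ENNReal.ofReal q) ν + eLpNorm (c • V) (ENNReal.ofReal q) ν :=
          eLpNorm_add_le ((hUm.const_smul a).1) ((hVm.const_smul c).1) hp1
      _ = ‖a‖₊ • eLpNorm U (ENNReal.ofReal q) ν + ‖c‖₊ • eLpNorm V (ENNReal.ofReal q) ν := by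
          rw [eLpNorm_const_smul, eLpNorm_const_smul]; rfl
  have hUfin : eLpNorm U (ENNReal.ofReal q) ν ≠ ⊤ := hUm.2.ne
  have hVfin : eLpNorm V (ENNReal.ofReal q) ν ≠ ⊤ := hVm.2.ne
  have hsfinU : ‖a‖₊ • eLpNorm U (ENNReal.ofReal q) ν ≠ ⊤ := by
    rw [ENNReal.smul_def]
    exact ENNReal.mul_ne_top ENNReal.coe_ne_top hUfin
  have hsfinV : ‖c‖₊ • eLpNorm V (ENNReal.ofReal q) ν ≠ ⊤ := by
    rw [ENNReal.smul_def]
    exact ENNReal.mul_ne_top ENNReal.coe_ne_top hVfin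
  have hfin : ‖a‖₊ • eLpNorm U (ENNReal.ofReal q) ν + ‖c‖₊ • eLpNorm V (ENNReal.ofReal q) ν ≠ ⊤ :=
    ENNReal.add_ne_top.mpr ⟨hsfinU, hsfinV⟩
  refine le_trans (ENNReal.toReal_mono hfin hchain) ?_
  rw [ENNReal.toReal_add hsfinU hsfinV]
  simp only [ENNReal.smul_def, smul_eq_mul, ENNReal.toReal_mul, ENNReal.coe_toReal, coe_nnnorm,
    Real.norm_of_nonneg ha, Real.norm_of_nonneg hc]
  exact le_refl _

lemma gagliardoSeminormV_nonneg {D : Type*} [MetricSpace D] [MeasurableSpace D]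
    {Y : Type*} [NormedAddCommGroup Y] (μ : Measure D) (d : ℕ) (θ q : ℝ) (φ : D → Y) :
    0 ≤ gagliardoSeminormV μ d θ q φ :=
  Real.rpow_nonneg (integral_nonneg fun p => div_nonneg
    (Real.rpow_nonneg (norm_nonneg _) _) (Real.rpow_nonneg dist_nonneg _)) _

/-- Local Lipschitz estimate for the Nemytski operator in the Gagliardo seminorm:
for `f : Y → Y₁` of class `C¹` with `f'` Lipschitz on balls, and
`R = max(|γ|_∞, |σ|_∞)`,
`[f∘γ - f∘σ]_{θ,q} ≤ K₂(f,R) |γ-σ|_∞ ([σ]_{θ,q} + ½[γ-σ]_{θ,q}) + K₁(f,R) [γ-σ]_{θ,q}`. -/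
theorem nemytski_lipschitz_on_balls
    {D : Type*} [MetricSpace D] [MeasurableSpace D] [OpensMeasurableSpace D]
    (μ : Measure D) [IsFiniteMeasure μ]
    {Y Y₁ : Type*} [NormedAddCommGroup Y] [NormedSpace ℝ Y] [SecondCountableTopology Y]
    [NormedAddCommGroup Y₁] [NormedSpace ℝ Y₁] [SecondCountableTopology Y₁]
    (d : ℕ) (θ q : ℝ) (hθ : θ ∈ Set.Ioo (0 : ℝ) 1) (hq : 1 ≤ q)
    (f : Y → Y₁) (hf : ContDiff ℝ 1 f)
    (K₁ K₂ : ℝ → ℝ) (hK₁_nonneg : ∀ R, 0 ≤ K₁ R) (hK₂_nonneg : ∀ R, 0 ≤ K₂ R)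
    (hK₁ : ∀ R : ℝ, ∀ x y : Y, ‖x‖ ≤ R → ‖y‖ ≤ R → ‖f y - f x‖ ≤ K₁ R * ‖y - x‖)
    (hK₂ : ∀ R : ℝ, ∀ x y : Y, ‖x‖ ≤ R → ‖y‖ ≤ R →
      ‖fderiv ℝ f y - fderiv ℝ f x‖ ≤ K₂ R * ‖y - x‖)
    (γ σ : D → Y)
    (hγ_bdd : MemLp γ ⊤ μ) (hσ_bdd : MemLp σ ⊤ μ)
    (hγ_Lq : MemLp γ (ENNReal.ofReal q) μ) (hσ_Lq : MemLp σ (ENNReal.ofReal q) μ)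
    (hσ_gag : Integrable (fun p : D × D =>
      ‖σ p.1 - σ p.2‖ ^ q / dist p.1 p.2 ^ ((d : ℝ) + θ * q)) (μ.prod μ))
    (hdiff_gag : Integrable (fun p : D × D =>
      ‖(γ p.1 - σ p.1) - (γ p.2 - σ p.2)‖ ^ q / dist p.1 p.2 ^ ((d : ℝ) + θ * q))
      (μ.prod μ)) :
    gagliardoSeminormV μ d θ q (fun x => f (γ x) - f (σ x))
      ≤ K₂ (max (linftyNormV μ γ) (linftyNormV μ σ)) * linftyNormV μ (fun x => γ x - σ x)
          * (gagliardoSeminormV μ d θ q σ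
            + (1 / 2) * gagliardoSeminormV μ d θ q (fun x => γ x - σ x))
        + K₁ (max (linftyNormV μ γ) (linftyNormV μ σ))
          * gagliardoSeminormV μ d θ q (fun x => γ x - σ x) := by
  obtain ⟨hθ0, hθ1⟩ := hθ
  have hq0 : (0:ℝ) < q := lt_of_lt_of_le one_pos hq
  set R : ℝ := max (linftyNormV μ γ) (linftyNormV μ σ) with hR_def
  set M : ℝ := linftyNormV μ (fun x => γ x - σ x) with hM_def
  have hM0 : 0 ≤ M := ENNReal.toReal_nonneg
  have hR0 : 0 ≤ R := le_trans ENNReal.toReal_nonneg (le_max_left _ _)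
  have hGσ := gagliardoSeminormV_nonneg μ d θ q σ
  have hGδ := gagliardoSeminormV_nonneg μ d θ q (fun x => γ x - σ x)
  have hRHS0 : 0 ≤ K₂ R * M * (gagliardoSeminormV μ d θ q σ
      + 1/2 * gagliardoSeminormV μ d θ q (fun x => γ x - σ x))
      + K₁ R * gagliardoSeminormV μ d θ q (fun x => γ x - σ x) := by
    have h1 : 0 ≤ K₂ R * M * (gagliardoSeminormV μ d θ q σ
        + 1/2 * gagliardoSeminormV μ d θ q (fun x => γ x - σ x)) :=
      mul_nonneg (mul_nonneg (hK₂_nonneg R) hM0) (by linarith)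
    have h2 : 0 ≤ K₁ R * gagliardoSeminormV μ d θ q (fun x => γ x - σ x) :=
      mul_nonneg (hK₁_nonneg R) hGδ
    linarith
  -- a.e. bounds
  have hbd : ∀ (φ : D → Y), MemLp φ ⊤ μ → ∀ᵐ x ∂μ, ‖φ x‖ ≤ linftyNormV μ φ := by
    intro φ hφ
    filter_upwards [ae_le_eLpNormEssSup (f := φ) (μ := μ)] with x hx
    have hne : eLpNormEssSup φ μ ≠ ⊤ := by
      rw [← eLpNorm_exponent_top]; exact hφ.2.ne
    calc ‖φ x‖ = ((‖φ x‖₊ : ENNReal)).toReal := by simp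
      _ ≤ (eLpNormEssSup φ μ).toReal := ENNReal.toReal_mono hne hx
      _ = linftyNormV μ φ := by rw [linftyNormV, eLpNorm_exponent_top]
  have hγR : ∀ᵐ x ∂μ, ‖γ x‖ ≤ R := by
    filter_upwards [hbd γ hγ_bdd] with x hx
    exact le_trans hx (le_max_left _ _)
  have hσR : ∀ᵐ x ∂μ, ‖σ x‖ ≤ R := by
    filter_upwards [hbd σ hσ_bdd] with x hx
    exact le_trans hx (le_max_right _ _)
  have hδM : ∀ᵐ x ∂μ, ‖γ x - σ x‖ ≤ M := by
    rw [hM_def]; exact hbd _ (hγ_bdd.sub hσ_bdd)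
  have hfst := MeasureTheory.Measure.quasiMeasurePreserving_fst (μ := μ) (ν := μ)
  have hsnd := MeasureTheory.Measure.quasiMeasurePreserving_snd (μ := μ) (ν := μ)
  -- main case split
  by_cases hGint : Integrable (fun p : D × D =>
      ‖f (γ p.1) - f (σ p.1) - (f (γ p.2) - f (σ p.2))‖ ^ q
        / dist p.1 p.2 ^ ((d : ℝ) + θ * q)) (μ.prod μ)
  · rcases eq_or_lt_of_le hR0 with hReq | hRpos
    · -- degenerate case R = 0 : γ = σ = 0 a.e.
      have hγ0 : ∀ᵐ x ∂μ, γ x = 0 := by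
        filter_upwards [hγR] with x hx
        exact norm_le_zero_iff.mp (hx.trans hReq.ge)
      have hσ0 : ∀ᵐ x ∂μ, σ x = 0 := by
        filter_upwards [hσR] with x hx
        exact norm_le_zero_iff.mp (hx.trans hReq.ge)
      have hg0 : ∀ᵐ x ∂μ, f (γ x) - f (σ x) = 0 := by
        filter_upwards [hγ0, hσ0] with x h1 h2
        rw [h1, h2, sub_self]
      have hzero : (fun p : D × D =>
          ‖f (γ p.1) - f (σ p.1) - (f (γ p.2) - f (σ p.2))‖ ^ q
            / dist p.1 p.2 ^ ((d : ℝ) + θ * q)) =ᵐ[μ.prod μ] (fun _ => (0:ℝ)) := by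
        filter_upwards [hfst.ae hg0, hsnd.ae hg0] with p h1 h2
        simp [h1, h2, Real.zero_rpow hq0.ne', zero_div]
      have hLHS : gagliardoSeminormV μ d θ q (fun x => f (γ x) - f (σ x)) = 0 := by
        rw [gagliardoSeminormV, integral_congr_ae hzero, integral_zero,
          Real.zero_rpow (one_div_ne_zero hq0.ne')]
      rw [hLHS]
      exact hRHS0
    · -- main case R > 0
      have hfd : ∀ z : Y, ‖z‖ ≤ R → ‖fderiv ℝ f z‖ ≤ K₁ R :=
        fun z hz => nemytski_fderiv_bound hRpos (hK₁_nonneg R) (hK₁ R) (hK₂ R) hz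
      have hW0 : ∀ p : D × D, (0:ℝ) ≤ dist p.1 p.2 ^ (((d:ℝ) + θ * q) / q) :=
        fun p => Real.rpow_nonneg dist_nonneg _
      have hWq : ∀ p : D × D,
          (dist p.1 p.2 ^ (((d:ℝ) + θ * q) / q)) ^ q = dist p.1 p.2 ^ ((d:ℝ) + θ * q) := by
        intro p
        rw [← Real.rpow_mul dist_nonneg, div_mul_cancel₀ _ hq0.ne']
      have hdiv_pow : ∀ (e : ℝ) (p : D × D), 0 ≤ e →
          (e / dist p.1 p.2 ^ (((d:ℝ) + θ * q) / q)) ^ q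
            = e ^ q / dist p.1 p.2 ^ ((d:ℝ) + θ * q) := by
        intro e p he
        rw [Real.div_rpow he (hW0 p), hWq]
      have hUq : (fun p : D × D => ‖σ p.1 - σ p.2‖ ^ q / dist p.1 p.2 ^ ((d:ℝ) + θ * q))
          = fun p : D × D =>
            (‖σ p.1 - σ p.2‖ / dist p.1 p.2 ^ (((d:ℝ) + θ * q) / q)) ^ q :=
        funext fun p => (hdiv_pow _ p (norm_nonneg _)).symm
      have hVq : (fun p : D × D =>
            ‖(γ p.1 - σ p.1) - (γ p.2 - σ p.2)‖ ^ q / dist p.1 p.2 ^ ((d:ℝ) + θ * q))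
          = fun p : D × D =>
            (‖(γ p.1 - σ p.1) - (γ p.2 - σ p.2)‖ / dist p.1 p.2 ^ (((d:ℝ) + θ * q) / q)) ^ q :=
        funext fun p => (hdiv_pow _ p (norm_nonneg _)).symm
      have hGq : (fun p : D × D =>
            ‖f (γ p.1) - f (σ p.1) - (f (γ p.2) - f (σ p.2))‖ ^ q
              / dist p.1 p.2 ^ ((d:ℝ) + θ * q))
          = fun p : D × D =>
            (‖f (γ p.1) - f (σ p.1) - (f (γ p.2) - f (σ p.2))‖
              / dist p.1 p.2 ^ (((d:ℝ) + θ * q) / q)) ^ q :=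
        funext fun p => (hdiv_pow _ p (norm_nonneg _)).symm
      -- pointwise bound
      have hptw : ∀ᵐ p ∂(μ.prod μ),
          ‖f (γ p.1) - f (σ p.1) - (f (γ p.2) - f (σ p.2))‖
              / dist p.1 p.2 ^ (((d:ℝ) + θ * q) / q)
            ≤ (K₂ R * M) * (‖σ p.1 - σ p.2‖ / dist p.1 p.2 ^ (((d:ℝ) + θ * q) / q))
              + (K₂ R * M / 2 + K₁ R)
                * (‖(γ p.1 - σ p.1) - (γ p.2 - σ p.2)‖
                    / dist p.1 p.2 ^ (((d:ℝ) + θ * q) / q)) := by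
        have h := hγR.and (hσR.and hδM)
        filter_upwards [hfst.ae h, hsnd.ae h] with p hp1 hp2
        obtain ⟨h1, h2, h3⟩ := hp1
        obtain ⟨h4, h5, h6⟩ := hp2
        have key := nemytski_pointwise hf hfd (hK₂ R) (hK₂_nonneg R) hM0 h2 h5 h1 h4 h3 h6
        have hdd := hW0 p
        calc ‖f (γ p.1) - f (σ p.1) - (f (γ p.2) - f (σ p.2))‖
              / dist p.1 p.2 ^ (((d:ℝ) + θ * q) / q)
            ≤ (K₂ R * M * (‖σ p.1 - σ p.2‖
                  + 1/2 * ‖(γ p.1 - σ p.1) - (γ p.2 - σ p.2)‖)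
                + K₁ R * ‖(γ p.1 - σ p.1) - (γ p.2 - σ p.2)‖)
              / dist p.1 p.2 ^ (((d:ℝ) + θ * q) / q) := by
              rw [div_eq_mul_inv, div_eq_mul_inv]
              exact mul_le_mul_of_nonneg_right key (inv_nonneg.mpr hdd)
          _ = (K₂ R * M) * (‖σ p.1 - σ p.2‖ / dist p.1 p.2 ^ (((d:ℝ) + θ * q) / q))
              + (K₂ R * M / 2 + K₁ R)
                * (‖(γ p.1 - σ p.1) - (γ p.2 - σ p.2)‖
                    / dist p.1 p.2 ^ (((d:ℝ) + θ * q) / q)) := by ring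
      have ha0 : 0 ≤ K₂ R * M := mul_nonneg (hK₂_nonneg R) hM0
      have hc0 : 0 ≤ K₂ R * M / 2 + K₁ R := by
        have := hK₁_nonneg R; linarith
      have main := nemytski_combine (ν := μ.prod μ) hq
        (G := fun p : D × D => ‖f (γ p.1) - f (σ p.1) - (f (γ p.2) - f (σ p.2))‖
          / dist p.1 p.2 ^ (((d:ℝ) + θ * q) / q))
        (U := fun p : D × D => ‖σ p.1 - σ p.2‖ / dist p.1 p.2 ^ (((d:ℝ) + θ * q) / q))
        (V := fun p : D × D => ‖(γ p.1 - σ p.1) - (γ p.2 - σ p.2)‖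
          / dist p.1 p.2 ^ (((d:ℝ) + θ * q) / q))
        (fun p => div_nonneg (norm_nonneg _) (hW0 p))
        (fun p => div_nonneg (norm_nonneg _) (hW0 p))
        (fun p => div_nonneg (norm_nonneg _) (hW0 p))
        ha0 hc0 (hGq ▸ hGint) (hUq ▸ hσ_gag) (hVq ▸ hdiff_gag) hptw
      have hL : gagliardoSeminormV μ d θ q (fun x => f (γ x) - f (σ x))
          = (∫ p : D × D, (‖f (γ p.1) - f (σ p.1) - (f (γ p.2) - f (σ p.2))‖
              / dist p.1 p.2 ^ (((d:ℝ) + θ * q) / q)) ^ q ∂(μ.prod μ)) ^ (1/q) := by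
        rw [gagliardoSeminormV, ← hGq]
      have hLσ : gagliardoSeminormV μ d θ q σ
          = (∫ p : D × D, (‖σ p.1 - σ p.2‖
              / dist p.1 p.2 ^ (((d:ℝ) + θ * q) / q)) ^ q ∂(μ.prod μ)) ^ (1/q) := by
        rw [gagliardoSeminormV, ← hUq]
      have hLδ : gagliardoSeminormV μ d θ q (fun x => γ x - σ x)
          = (∫ p : D × D, (‖(γ p.1 - σ p.1) - (γ p.2 - σ p.2)‖
              / dist p.1 p.2 ^ (((d:ℝ) + θ * q) / q)) ^ q ∂(μ.prod μ)) ^ (1/q) := by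
        rw [gagliardoSeminormV, ← hVq]
      rw [hL, hLσ, hLδ]
      refine le_trans main (le_of_eq ?_)
      ring
  · -- LHS integral is not defined: it is zero
    have hLHS : gagliardoSeminormV μ d θ q (fun x => f (γ x) - f (σ x)) = 0 := by
      rw [gagliardoSeminormV]
      rw [integral_undef hGint, Real.zero_rpow (one_div_ne_zero hq0.ne')]
    rw [hLHS]
    exact hRHS0
end
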